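/- Let p be a prime, let s ≥ 1 and g ≥ 1 be integers, and for each i ∈ {1,…,g} let a_i, d_i ∈ ℤ_p^× be p-adic units, let b_i, c_i ∈ ℤ_p, and let n_i, x_i, y_i be nonnegative integers with y_i ≤ n_i. Consider the polynomial P = ∏_{i=1}^g (p^s·c_i·X_i + d_i)^{n_i − y_i} (p·a_i·X_i + b_i)^{y_i} ∈ ℤ_p[X_1,…,X_g], and let A be the coefficient of X_1^{x_1}⋯X_g^{x_g} in P. If x_i > n_i for some i, then A = 0. Otherwise, the p-adic valuation of A is at least (x_1 + ⋯ + x_g) + (s−1)·Σ_{i=1}^g max(0, x_i − y_i). -/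

import Mathlib

open MvPolynomial
open Finset

namespace Stmt4Aux

variable {p : ℕ} [Fact p.Prime]


lemma expand_aux (u v : ℤ_[p]) {g : ℕ} (i : Fin g) (e : ℕ) :
    ((C u * X i + C v : MvPolynomial (Fin g) ℤ_[p]) ^ e)
      = ∑ k ∈ Finset.range (e + 1),
          monomial (Finsupp.single i k) (u ^ k * v ^ (e - k) * (e.choose k : ℤ_[p])) := by
  rw [add_pow]
  refine Finset.sum_congr rfl fun k _ => ?_
  rw [monomial_eq, Finsupp.prod_single_index (by exact pow_zero (X i)),
    map_mul, map_mul, map_natCast, map_pow, map_pow]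
  ring

lemma factor_aux (s : ℕ) (hs : 1 ≤ s) {g : ℕ} (i : Fin g)
    (a b c d : ℤ_[p]) (e1 e2 : ℕ) (m : Fin g →₀ ℕ) :
    (coeff m ((C ((p:ℤ_[p]) ^ s * c) * X i + C d) ^ e1
        * (C ((p:ℤ_[p]) * a) * X i + C b) ^ e2) ≠ 0 →
      m = Finsupp.single i (m i) ∧ m i ≤ e1 + e2) ∧
    (p : ℤ_[p]) ^ (m i + (s - 1) * (m i - e2)) ∣
      coeff m ((C ((p:ℤ_[p]) ^ s * c) * X i + C d) ^ e1
        * (C ((p:ℤ_[p]) * a) * X i + C b) ^ e2) := by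
  rw [expand_aux, expand_aux, Finset.sum_mul_sum]
  simp only [monomial_mul, ← Finsupp.single_add, coeff_sum, coeff_monomial]
  constructor
  · intro hne
    obtain ⟨k, hk, hk'⟩ := Finset.exists_ne_zero_of_sum_ne_zero hne
    obtain ⟨l, hl, hl'⟩ := Finset.exists_ne_zero_of_sum_ne_zero hk'
    rw [Finset.mem_range] at hk hl
    split at hl'
    · next h =>
      have hmi : m i = k + l := by rw [← h, Finsupp.single_eq_same]
      exact ⟨by rw [hmi, ← h], by omega⟩
    · exact absurd rfl hl'
  · refine Finset.dvd_sum fun k hk => Finset.dvd_sum fun l hl => ?_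
    rw [Finset.mem_range] at hk hl
    split
    · next h =>
      have hmi : m i = k + l := by rw [← h, Finsupp.single_eq_same]
      have hle : m i + (s - 1) * (m i - e2) ≤ s * k + l := by
        have h1 : (s - 1) * (m i - e2) ≤ (s - 1) * k := Nat.mul_le_mul_left _ (by omega)
        have h2 : s * k = (s - 1) * k + k := by
          conv_lhs => rw [show s = (s-1) + 1 by omega]
          ring
        linarith
      refine (pow_dvd_pow _ hle).trans ⟨c ^ k * d ^ (e1 - k) * (e1.choose k : ℤ_[p]) *
        (a ^ l * b ^ (e2 - l) * (e2.choose l : ℤ_[p])), ?_⟩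
      ring
    · exact dvd_zero _

lemma claim_aux (s : ℕ) (hs : 1 ≤ s) {g : ℕ}
    (a b c d : Fin g → ℤ_[p]) (n y : Fin g → ℕ) (hyn : ∀ i, y i ≤ n i)
    (t : Finset (Fin g)) (m : Fin g →₀ ℕ) :
    (coeff m (∏ i ∈ t, ((C ((p:ℤ_[p]) ^ s * c i) * X i + C (d i)) ^ (n i - y i)
        * (C ((p:ℤ_[p]) * a i) * X i + C (b i)) ^ (y i))) ≠ 0 →
      (∀ i ∉ t, m i = 0) ∧ ∀ i ∈ t, m i ≤ n i) ∧
    (p : ℤ_[p]) ^ (∑ i ∈ t, (m i + (s - 1) * (m i - y i))) ∣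
      coeff m (∏ i ∈ t, ((C ((p:ℤ_[p]) ^ s * c i) * X i + C (d i)) ^ (n i - y i)
        * (C ((p:ℤ_[p]) * a i) * X i + C (b i)) ^ (y i))) := by
  induction t using Finset.induction_on generalizing m with
  | empty =>
    refine ⟨fun h => ?_, by simp⟩
    rw [Finset.prod_empty, coeff_one] at h
    have hm : (0 : Fin g →₀ ℕ) = m := by by_contra h0; simp [h0] at h
    exact ⟨fun i _ => by rw [← hm]; rfl, by simp⟩
  | @insert j t hj ih =>
    rw [Finset.prod_insert hj, coeff_mul]
    constructor
    · intro hne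
      obtain ⟨q, hq, hq'⟩ := Finset.exists_ne_zero_of_sum_ne_zero hne
      rw [Finset.HasAntidiagonal.mem_antidiagonal] at hq
      have h1 : coeff q.1 ((C ((p:ℤ_[p]) ^ s * c j) * X j + C (d j)) ^ (n j - y j)
          * (C ((p:ℤ_[p]) * a j) * X j + C (b j)) ^ (y j)) ≠ 0 :=
        fun h => hq' (by rw [h, zero_mul])
      have h2 : coeff q.2 (∏ i ∈ t, ((C ((p:ℤ_[p]) ^ s * c i) * X i + C (d i)) ^ (n i - y i)
          * (C ((p:ℤ_[p]) * a i) * X i + C (b i)) ^ (y i))) ≠ 0 :=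
        fun h => hq' (by rw [h, mul_zero])
      obtain ⟨hq1, hq1le⟩ := (factor_aux s hs j (a j) (b j) (c j) (d j) _ _ q.1).1 h1
      obtain ⟨hq2, hq2le⟩ := ((ih q.2).1 h2 : _)
      have hm : ∀ i, m i = q.1 i + q.2 i := fun i => by rw [← hq]; rfl
      constructor
      · intro i hi
        have hij : i ≠ j := fun h => hi (h ▸ Finset.mem_insert_self j t)
        have hit : i ∉ t := fun h => hi (Finset.mem_insert_of_mem h)
        rw [hm, hq2 i hit, hq1, Finsupp.single_apply, if_neg (fun h => hij h.symm)]
      · intro i hi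
        rcases Finset.mem_insert.mp hi with rfl | hit
        · rw [hm, hq2 i hj]
          calc q.1 i + 0 = q.1 i := by ring
            _ ≤ (n i - y i) + y i := hq1le
            _ = n i := Nat.sub_add_cancel (hyn i)
        · have : q.1 i = 0 := by
            rw [hq1, Finsupp.single_apply,
              if_neg (fun h : j = i => hj (h ▸ hit))]
          rw [hm, this, zero_add]
          exact hq2le i hit
    · refine Finset.dvd_sum fun q hq => ?_
      rw [Finset.HasAntidiagonal.mem_antidiagonal] at hq
      by_cases h1 : coeff q.1 ((C ((p:ℤ_[p]) ^ s * c j) * X j + C (d j)) ^ (n j - y j)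
          * (C ((p:ℤ_[p]) * a j) * X j + C (b j)) ^ (y j)) = 0
      · rw [h1, zero_mul]; exact dvd_zero _
      by_cases h2 : coeff q.2 (∏ i ∈ t, ((C ((p:ℤ_[p]) ^ s * c i) * X i + C (d i)) ^ (n i - y i)
          * (C ((p:ℤ_[p]) * a i) * X i + C (b i)) ^ (y i))) = 0
      · rw [h2, mul_zero]; exact dvd_zero _
      obtain ⟨hq1, _⟩ := (factor_aux s hs j (a j) (b j) (c j) (d j) _ _ q.1).1 h1
      obtain ⟨hq2, _⟩ := (ih q.2).1 h2
      have hm : ∀ i, m i = q.1 i + q.2 i := fun i => by rw [← hq]; rfl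
      have hmj : m j = q.1 j := by rw [hm, hq2 j hj, add_zero]
      have hmt : ∀ i ∈ t, m i = q.2 i := by
        intro i hit
        have : q.1 i = 0 := by
          rw [hq1, Finsupp.single_apply, if_neg (fun h : j = i => hj (h ▸ hit))]
        rw [hm, this, zero_add]
      rw [Finset.sum_insert hj, pow_add, hmj,
        Finset.sum_congr rfl (fun i hi => by rw [hmt i hi])]
      exact mul_dvd_mul (factor_aux s hs j (a j) (b j) (c j) (d j) _ _ q.1).2 (ih q.2).2

end Stmt4Aux

open Stmt4Aux

/-- Let `p` be a prime, `s ≥ 1`, `g ≥ 1`, and for each `i` let `a_i, d_i ∈ ℤ_p^×` be units,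
`b_i, c_i ∈ ℤ_p`, and `n_i, x_i, y_i` nonnegative integers with `y_i ≤ n_i`. Let `A` be the
coefficient of `X_1^{x_1}⋯X_g^{x_g}` in
`∏_i (p^s·c_i·X_i + d_i)^(n_i − y_i) (p·a_i·X_i + b_i)^(y_i)`.
If `x_i > n_i` for some `i` then `A = 0`; otherwise the p-adic valuation of `A` is at least
`(x_1 + ⋯ + x_g) + (s−1)·Σ_i max(0, x_i − y_i)` (expressed via the p-adic norm). -/
theorem stmt4 (p : ℕ) [Fact p.Prime] (s g : ℕ) (hs : 1 ≤ s) (hg : 1 ≤ g)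
    (a b c d : Fin g → ℤ_[p]) (ha : ∀ i, IsUnit (a i)) (hd : ∀ i, IsUnit (d i))
    (n x y : Fin g → ℕ) (hyn : ∀ i, y i ≤ n i) (A : ℤ_[p])
    (hA : A = MvPolynomial.coeff (Finsupp.equivFunOnFinite.symm x)
      (∏ i : Fin g,
        (MvPolynomial.C ((p : ℤ_[p]) ^ s * c i) * MvPolynomial.X i
            + MvPolynomial.C (d i)) ^ (n i - y i) *
          (MvPolynomial.C ((p : ℤ_[p]) * a i) * MvPolynomial.X i
            + MvPolynomial.C (b i)) ^ y i)) :
    ((∃ i, n i < x i) → A = 0) ∧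
    ((∀ i, x i ≤ n i) →
      ‖A‖ ≤ (p : ℝ) ^ (-(((∑ i, x i) + (s - 1) * ∑ i, (x i - y i) : ℕ) : ℤ))) := by
  obtain ⟨h1, h2⟩ := claim_aux s hs a b c d n y hyn Finset.univ
    (Finsupp.equivFunOnFinite.symm x)
  have hx : ∀ i, (Finsupp.equivFunOnFinite.symm x) i = x i := fun i => rfl
  subst hA
  constructor
  · rintro ⟨i, hi⟩
    by_contra hA0
    have := (h1 hA0).2 i (Finset.mem_univ i)
    rw [hx] at this
    omega
  · intro _
    have hE : (((∑ i, x i) + (s - 1) * ∑ i, (x i - y i) : ℕ) : ℤ)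
        = ((∑ i, ((Finsupp.equivFunOnFinite.symm x) i
            + (s - 1) * ((Finsupp.equivFunOnFinite.symm x) i - y i)) : ℕ) : ℤ) := by
      congr 1
      simp only [hx]
      rw [Finset.sum_add_distrib, Finset.mul_sum]
    rw [hE, PadicInt.norm_le_pow_iff_mem_span_pow, Ideal.mem_span_singleton]
    exact h2
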